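/- Let r ≥ 1 be an integer. For s ≥ 0 define the negative binomial probability mass function nb_r(s, k) = C(k + r − 1, k) (s/(s+r))^k (r/(s+r))^r for k ∈ ℕ, where C denotes the binomial coefficient. Then for all s, s' ≥ 0: (1/2) Σ_{k=0}^∞ | nb_r(s, k) − nb_r(s', k) | ≤ 1 − e^{−|s − s'|}. -/

import Mathlib

/-- The negative binomial probability mass function with number of failures `r`
and success probability `s/(s+r)`. -/
noncomputable def nbPMF (r : ℕ) (s : ℝ) (k : ℕ) : ℝ :=
  ((k + r - 1).choose k : ℝ) * (s / (s + r)) ^ k * ((r : ℝ) / (s + r)) ^ r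

lemma nbPMF_nonneg (r : ℕ) {s : ℝ} (hs : 0 ≤ s) (k : ℕ) : 0 ≤ nbPMF r s k := by
  have hr0 : (0:ℝ) ≤ r := Nat.cast_nonneg r
  unfold nbPMF
  positivity

lemma nbPMF_hasSum (r : ℕ) (hr : 1 ≤ r) {s : ℝ} (hs : 0 ≤ s) :
    HasSum (nbPMF r s) 1 := by
  have hrpos : (0:ℝ) < r := by exact_mod_cast hr
  have hsr : (0:ℝ) < s + r := by linarith
  set q : ℝ := s / (s + r) with hq
  have hq0 : 0 ≤ q := by positivity
  have hq1 : q < 1 := by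
    rw [hq, div_lt_one hsr]; linarith
  have hnorm : ‖q‖ < 1 := by
    rw [Real.norm_eq_abs, abs_of_nonneg hq0]; exact hq1
  have h1q : 1 - q = (r : ℝ) / (s + r) := by
    rw [hq]; field_simp; ring
  have key := hasSum_choose_mul_geometric_of_norm_lt_one (𝕜 := ℝ) (r - 1) hnorm
  have key2 := key.mul_right (((r:ℝ) / (s + r)) ^ r)
  have he : (r - 1) + 1 = r := Nat.succ_pred_eq_of_pos hr
  have hval : 1 / (1 - q) ^ (r - 1 + 1) * ((r:ℝ) / (s + r)) ^ r = 1 := by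
    rw [he, h1q]
    field_simp
  rw [hval] at key2
  convert key2 using 2 with k
  · rfl
  unfold nbPMF
  have hch : (k + r - 1).choose k = (k + (r - 1)).choose (r - 1) := by
    have h1 : k + r - 1 = k + (r - 1) := by omega
    rw [h1]
    have := Nat.choose_symm (n := k + (r - 1)) (k := r - 1) (Nat.le_add_left _ _)
    rw [show k + (r - 1) - (r - 1) = k by omega] at this
    exact this
  rw [hch]

lemma nbPMF_exp_le (r : ℕ) (hr : 1 ≤ r) {s s' : ℝ} (hs : 0 ≤ s) (hle : s ≤ s') (k : ℕ) :
    Real.exp (-(s' - s)) * nbPMF r s k ≤ nbPMF r s' k := by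
  have hrpos : (0:ℝ) < r := by exact_mod_cast hr
  have hsr : (0:ℝ) < s + r := by linarith
  have hsr' : (0:ℝ) < s' + r := by linarith
  have hh : 0 ≤ s' - s := by linarith
  have hqmono : (s / (s + r)) ^ k ≤ (s' / (s' + r)) ^ k := by
    apply pow_le_pow_left₀ (by positivity)
    rw [div_le_div_iff₀ hsr hsr']
    nlinarith
  have hpow : (s' + r) ^ r ≤ Real.exp (s' - s) * (s + r) ^ r := by
    have h1 : s' + r ≤ (s + r) * Real.exp ((s' - s) / (s + r)) := by
      have h := Real.add_one_le_exp ((s' - s) / (s + r))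
      have h2 := mul_le_mul_of_nonneg_left h hsr.le
      have h3 : (s + r) * ((s' - s) / (s + r) + 1) = s' + r := by field_simp; ring
      rw [h3] at h2; exact h2
    calc (s' + r) ^ r ≤ ((s + r) * Real.exp ((s' - s) / (s + r))) ^ r :=
          pow_le_pow_left₀ (by linarith) h1 r
      _ = (s + r) ^ r * Real.exp ((s' - s) / (s + r)) ^ r := by rw [mul_pow]
      _ = (s + r) ^ r * Real.exp (r * ((s' - s) / (s + r))) := by
          rw [← Real.exp_nat_mul]
      _ ≤ (s + r) ^ r * Real.exp (s' - s) := by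
          have hfr : (r:ℝ) / (s + r) ≤ 1 := by rw [div_le_one hsr]; linarith
          have hm : (r:ℝ) * ((s' - s) / (s + r)) ≤ s' - s := by
            calc (r:ℝ) * ((s' - s) / (s + r)) = (s' - s) * ((r:ℝ) / (s + r)) := by ring
              _ ≤ (s' - s) * 1 := mul_le_mul_of_nonneg_left hfr hh
              _ = s' - s := mul_one _
          exact mul_le_mul_of_nonneg_left (Real.exp_le_exp.2 hm) (by positivity)
      _ = Real.exp (s' - s) * (s + r) ^ r := by ring
  have htail : Real.exp (-(s' - s)) * ((r:ℝ) / (s + r)) ^ r ≤ ((r:ℝ) / (s' + r)) ^ r := by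
    rw [Real.exp_neg, inv_mul_le_iff₀ (Real.exp_pos _), div_pow, div_pow,
        ← mul_div_assoc, div_le_div_iff₀ (by positivity) (by positivity)]
    calc (r:ℝ)^r * (s' + r)^r ≤ (r:ℝ)^r * (Real.exp (s' - s) * (s + r)^r) :=
          mul_le_mul_of_nonneg_left hpow (by positivity)
      _ = Real.exp (s' - s) * (r:ℝ)^r * (s + r)^r := by ring
  have hC : (0:ℝ) ≤ ((k + r - 1).choose k : ℝ) := Nat.cast_nonneg _
  unfold nbPMF
  calc Real.exp (-(s' - s)) * (((k + r - 1).choose k : ℝ) * (s / (s + r)) ^ k * ((r:ℝ) / (s + r)) ^ r)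
      = (((k + r - 1).choose k : ℝ) * (s / (s + r)) ^ k) * (Real.exp (-(s' - s)) * ((r:ℝ) / (s + r)) ^ r) := by ring
    _ ≤ (((k + r - 1).choose k : ℝ) * (s' / (s' + r)) ^ k) * ((r:ℝ) / (s' + r)) ^ r := by
        apply mul_le_mul (mul_le_mul_of_nonneg_left hqmono hC) htail (by positivity)
          (mul_nonneg hC (pow_nonneg (div_nonneg (by linarith) (by linarith)) k))

lemma negbin_tv_bound_le (r : ℕ) (hr : 1 ≤ r) {s s' : ℝ} (hs : 0 ≤ s) (hs' : 0 ≤ s')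
    (hle : s ≤ s') :
    (1 / 2) * ∑' k : ℕ, |nbPMF r s k - nbPMF r s' k| ≤ 1 - Real.exp (-(s' - s)) := by
  have hp := nbPMF_hasSum r hr hs
  have hp' := nbPMF_hasSum r hr hs'
  have hexp1 : Real.exp (-(s' - s)) ≤ 1 := by
    rw [← Real.exp_zero]
    exact Real.exp_le_exp.2 (by linarith)
  have hmin_le : ∀ k, Real.exp (-(s' - s)) * nbPMF r s k ≤
      min (nbPMF r s k) (nbPMF r s' k) := fun k =>
    le_min (by nlinarith [nbPMF_nonneg r hs k]) (nbPMF_exp_le r hr hs hle k)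
  have hmin_summable : Summable (fun k => min (nbPMF r s k) (nbPMF r s' k)) :=
    Summable.of_nonneg_of_le
      (fun k => le_min (nbPMF_nonneg r hs k) (nbPMF_nonneg r hs' k))
      (fun k => min_le_left _ _) hp.summable
  set T := ∑' k : ℕ, min (nbPMF r s k) (nbPMF r s' k) with hTdef
  have hT : HasSum (fun k => min (nbPMF r s k) (nbPMF r s' k)) T := hmin_summable.hasSum
  have hTlb : Real.exp (-(s' - s)) ≤ T := by
    have h1 : HasSum (fun k => Real.exp (-(s' - s)) * nbPMF r s k)
        (Real.exp (-(s' - s)) * 1) := hp.mul_left _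
    have := hasSum_le hmin_le h1 hT
    linarith
  have habs : ∀ k, |nbPMF r s k - nbPMF r s' k| =
      nbPMF r s k + nbPMF r s' k - 2 * min (nbPMF r s k) (nbPMF r s' k) := by
    intro k
    rcases le_total (nbPMF r s k) (nbPMF r s' k) with h | h
    · rw [abs_of_nonpos (by linarith), min_eq_left h]; ring
    · rw [abs_of_nonneg (by linarith), min_eq_right h]; ring
  have hsum : HasSum (fun k => |nbPMF r s k - nbPMF r s' k|) (1 + 1 - 2 * T) := by
    have h := (hp.add hp').sub (hT.mul_left 2)
    have heq : (fun k => nbPMF r s k + nbPMF r s' k -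
        2 * min (nbPMF r s k) (nbPMF r s' k)) =
        fun k => |nbPMF r s k - nbPMF r s' k| := funext fun k => (habs k).symm
    rw [← heq]
    exact h
  rw [hsum.tsum_eq]
  linarith

/-- Total variation bound between negative binomial distributions
`NB(r, s/(s+r))` and `NB(r, s'/(s'+r))`: half the ℓ¹-distance of the mass
functions is at most `1 - exp(-|s - s'|)`. -/
theorem negbin_tv_bound (r : ℕ) (hr : 1 ≤ r) (s s' : ℝ) (hs : 0 ≤ s) (hs' : 0 ≤ s') :
    (1 / 2) * ∑' k : ℕ, |nbPMF r s k - nbPMF r s' k| ≤ 1 - Real.exp (-|s - s'|) := by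
  rcases le_total s s' with h | h
  · rw [show |s - s'| = s' - s from by rw [abs_of_nonpos (by linarith)]; ring]
    exact negbin_tv_bound_le r hr hs hs' h
  · rw [show |s - s'| = s - s' from abs_of_nonneg (by linarith)]
    have := negbin_tv_bound_le r hr hs' hs h
    simpa [abs_sub_comm] using this
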